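/- Let H be a connected bialgebra, A a commutative algebra split as A = A₋ ⊕ A₊ into subalgebras, and φ: H → A a character. Then both parts φ₋ and φ₊ of the Birkhoff decomposition of φ are algebra morphisms. -/

import Mathlib

open TensorProduct

variable {K : Type*} [Field K]
variable {H : Type*} [Ring H] [Bialgebra K H]
variable {A : Type*} [CommRing A] [Algebra K A]

/-- The convolution product on `Hom(H, A)`. -/
noncomputable def conv (f g : H →ₗ[K] A) : H →ₗ[K] A :=
  (LinearMap.mul' K A) ∘ₗ (TensorProduct.map f g) ∘ₗ (Coalgebra.comul (R := K))

/-- The image `p ⊗ q` of a pair of submodules inside `H ⊗ H`. -/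
noncomputable def tensorSub (p q : Submodule K H) : Submodule K (H ⊗[K] H) :=
  LinearMap.range (TensorProduct.map p.subtype q.subtype)

/-- The Bogoliubov map `φ̄ x = φ x + m ∘ (φm ⊗ φ) (Δ̃ x)`. -/
noncomputable def bogoliubov (φ φm : H →ₗ[K] A) (x : H) : A :=
  φ x + (LinearMap.mul' K A)
    ((TensorProduct.map φm φ)
      (Coalgebra.comul (R := K) x - (1 : H) ⊗ₜ[K] x - x ⊗ₜ[K] (1 : H)))

lemma tmul_mem_tensorSub {p q : Submodule K H} {a b : H} (ha : a ∈ p) (hb : b ∈ q) :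
    a ⊗ₜ[K] b ∈ tensorSub p q :=
  ⟨(⟨a, ha⟩ : p) ⊗ₜ[K] (⟨b, hb⟩ : q), by simp⟩

lemma tensorSub_repr {p q : Submodule K H} {w : H ⊗[K] H} (hw : w ∈ tensorSub p q) :
    ∃ s : Finset (p × q), w = ∑ z ∈ s, (z.1 : H) ⊗ₜ[K] (z.2 : H) := by
  obtain ⟨t, rfl⟩ := hw
  obtain ⟨s, rfl⟩ := TensorProduct.exists_finset t
  exact ⟨s, by simp [map_sum]⟩

lemma submodule_sum_le {ι M : Type*} [AddCommMonoid M] [Module K M] {s : Finset ι}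
    {p : ι → Submodule K M} {N : Submodule K M} (h : ∀ i ∈ s, p i ≤ N) :
    ∑ i ∈ s, p i ≤ N := by
  classical
  induction s using Finset.induction with
  | empty => simp
  | @insert a s ha ih =>
      rw [Finset.sum_insert ha, Submodule.add_eq_sup]
      exact sup_le (h a (Finset.mem_insert_self a s))
        (ih fun i hi => h i (Finset.mem_insert_of_mem hi))

lemma map_pi_pi (f : H →ₗ[K] H) (t : H ⊗[K] H) :
    TensorProduct.map (LinearMap.id - f) (LinearMap.id - f) t =
      t - TensorProduct.map LinearMap.id f t - TensorProduct.map f LinearMap.id t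
        + TensorProduct.map f f t := by
  induction t with
  | zero => simp
  | tmul a b =>
      simp only [TensorProduct.map_tmul, LinearMap.sub_apply, LinearMap.id_apply,
        TensorProduct.sub_tmul, TensorProduct.tmul_sub]
      abel
  | add u v hu hv =>
      simp only [map_add]
      rw [hu, hv]
      abel

lemma reduced_comul_mem
    (F : ℕ → Submodule K H) (hmono : Monotone F)
    (hcomul : ∀ n, ∀ x ∈ F n,
      Coalgebra.comul (R := K) x ∈
        ∑ i ∈ Finset.range (n + 1), tensorSub (F i) (F (n - i)))
    (hconn : F 0 = Submodule.span K {(1 : H)})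
    (n : ℕ) (x : H) (hx : x ∈ F n) (hεx : Coalgebra.counit (R := K) x = 0) :
    Coalgebra.comul (R := K) x - (1 : H) ⊗ₜ[K] x - x ⊗ₜ[K] (1 : H) ∈
      tensorSub (F (n - 1) ⊓ LinearMap.ker (Coalgebra.counit (R := K)))
        (F (n - 1) ⊓ LinearMap.ker (Coalgebra.counit (R := K))) := by
  classical
  set ε : H →ₗ[K] K := Coalgebra.counit (R := K) with hε
  set f : H →ₗ[K] H := (Algebra.linearMap K H) ∘ₗ ε with hf
  set π : H →ₗ[K] H := LinearMap.id - f with hπ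
  have h1F : ∀ j, (1 : H) ∈ F j := fun j =>
    hmono (Nat.zero_le j) (hconn ▸ Submodule.mem_span_singleton_self 1)
  have hπ_apply : ∀ z : H, π z = z - (ε z) • (1 : H) := by
    intro z
    simp [hπ, hf, Algebra.linearMap_apply, Algebra.algebraMap_eq_smul_one]
  have hεπ : ∀ z : H, ε (π z) = 0 := by
    intro z
    rw [hπ_apply]
    simp [hε, Bialgebra.counit_one]
  have hπF : ∀ j, ∀ a ∈ F j, π a ∈ F j ⊓ LinearMap.ker ε := by
    intro j a ha
    refine Submodule.mem_inf.2 ⟨?_, LinearMap.mem_ker.2 (hεπ a)⟩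
    rw [hπ_apply]
    exact sub_mem ha (Submodule.smul_mem _ _ (h1F j))
  have hπ0 : ∀ a ∈ F 0, π a = 0 := by
    intro a ha
    rw [hconn] at ha
    obtain ⟨c, rfl⟩ := Submodule.mem_span_singleton.1 ha
    rw [hπ_apply]
    simp [hε, Bialgebra.counit_one]
  -- counit identities
  have h1 : TensorProduct.map LinearMap.id f (Coalgebra.comul (R := K) x) = x ⊗ₜ[K] (1 : H) := by
    have : TensorProduct.map LinearMap.id f =
        (TensorProduct.map LinearMap.id (Algebra.linearMap K H)) ∘ₗ
          (LinearMap.lTensor H ε) := by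
      rw [hf]
      rw [LinearMap.lTensor, ← TensorProduct.map_comp]
      simp
    rw [this]
    simp only [LinearMap.comp_apply]
    rw [hε, Coalgebra.lTensor_counit_comul]
    simp [Algebra.linearMap_apply]
  have h2 : TensorProduct.map f LinearMap.id (Coalgebra.comul (R := K) x) = (1 : H) ⊗ₜ[K] x := by
    have : TensorProduct.map f LinearMap.id =
        (TensorProduct.map (Algebra.linearMap K H) LinearMap.id) ∘ₗ
          (LinearMap.rTensor H ε) := by
      rw [hf]
      rw [LinearMap.rTensor, ← TensorProduct.map_comp]
      simp
    rw [this]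
    simp only [LinearMap.comp_apply]
    rw [hε, Coalgebra.rTensor_counit_comul]
    simp [Algebra.linearMap_apply]
  have h3 : TensorProduct.map f f (Coalgebra.comul (R := K) x) = 0 := by
    have : TensorProduct.map f f =
        (TensorProduct.map f LinearMap.id) ∘ₗ (TensorProduct.map LinearMap.id f) := by
      rw [← TensorProduct.map_comp]; simp
    rw [this, LinearMap.comp_apply, h1]
    simp only [TensorProduct.map_tmul, LinearMap.id_apply]
    rw [hf]
    simp [hεx]
  -- the identity
  have hid : TensorProduct.map π π (Coalgebra.comul (R := K) x) =
      Coalgebra.comul (R := K) x - (1 : H) ⊗ₜ[K] x - x ⊗ₜ[K] (1 : H) := by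
    rw [hπ, map_pi_pi, h1, h2, h3]
    abel
  rw [← hid]
  -- membership
  have hmem := hcomul n x hx
  set N : Submodule K (H ⊗[K] H) :=
    tensorSub (F (n - 1) ⊓ LinearMap.ker ε) (F (n - 1) ⊓ LinearMap.ker ε) with hN
  have hle : (∑ i ∈ Finset.range (n + 1), tensorSub (F i) (F (n - i))) ≤
      Submodule.comap (TensorProduct.map π π) N := by
    apply submodule_sum_le
    intro i hi
    intro w hw
    obtain ⟨s, rfl⟩ := tensorSub_repr hw
    rw [Submodule.mem_comap, map_sum]
    apply Submodule.sum_mem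
    intro z hz
    rw [TensorProduct.map_tmul]
    by_cases hi0 : i = 0
    · have : π (z.1 : H) = 0 := hπ0 _ (by simpa [hi0] using z.1.2)
      rw [this, TensorProduct.zero_tmul]
      exact Submodule.zero_mem N
    · by_cases hni : n - i = 0
      · have : π (z.2 : H) = 0 := hπ0 _ (by simpa [hni] using z.2.2)
        rw [this, TensorProduct.tmul_zero]
        exact Submodule.zero_mem N
      · have hi1 : i ≤ n - 1 := by
          have := Finset.mem_range.1 hi; omega
        have hni1 : n - i ≤ n - 1 := by omega
        have m1 := hπF i (z.1 : H) z.1.2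
        have m2 := hπF (n - i) (z.2 : H) z.2.2
        rw [Submodule.mem_inf] at m1 m2
        exact tmul_mem_tensorSub
          (Submodule.mem_inf.2 ⟨hmono hi1 m1.1, m1.2⟩)
          (Submodule.mem_inf.2 ⟨hmono hni1 m2.1, m2.2⟩)
  exact hle hmem

/-- for a connected bialgebra `H`, a commutative algebra `A` split
into subalgebras `A = A₋ ⊕ A₊` with projection `R` onto `A₋`, and a character
`φ : H → A`, both parts `φ₋` (defined by the renormalization recursion
`φ₋ x = -R (φ̄ x)` on `ker ε`) and `φ₊ = φ₋ ⋆ φ` of the Birkhoff decomposition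
of `φ` are algebra morphisms. -/
theorem birkhoff_of_character_is_character
    (F : ℕ → Submodule K H)
    (hmono : Monotone F)
    (hcover : ∀ x : H, ∃ n, x ∈ F n)
    (hcomul : ∀ n, ∀ x ∈ F n,
      Coalgebra.comul (R := K) x ∈
        ∑ i ∈ Finset.range (n + 1), tensorSub (F i) (F (n - i)))
    (hmul : ∀ n m : ℕ, ∀ x ∈ F n, ∀ y ∈ F m, x * y ∈ F (n + m))
    (hconn : F 0 = Submodule.span K {(1 : H)})
    (Am Ap : Submodule K A) (hAc : IsCompl Am Ap)
    (hAm : ∀ x ∈ Am, ∀ y ∈ Am, x * y ∈ Am)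
    (hAp : ∀ x ∈ Ap, ∀ y ∈ Ap, x * y ∈ Ap)
    (R : A →ₗ[K] A) (hR₁ : ∀ a ∈ Am, R a = a) (hR₂ : ∀ a ∈ Ap, R a = 0)
    (φ : H →ₐ[K] A)
    (φm : H →ₗ[K] A) (hφm1 : φm 1 = 1)
    (hφm : ∀ x : H, Coalgebra.counit (R := K) x = 0 →
      φm x = -R (bogoliubov φ.toLinearMap φm x)) :
    (∀ x y : H, φm (x * y) = φm x * φm y) ∧
    ((conv φm φ.toLinearMap) 1 = 1 ∧
      ∀ x y : H, (conv φm φ.toLinearMap) (x * y) =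
        (conv φm φ.toLinearMap) x * (conv φm φ.toLinearMap) y) := by
  classical
  -- R facts
  have hRmem : ∀ a : A, R a ∈ Am := by
    intro a
    obtain ⟨y, z, hy, hz, rfl⟩ := Submodule.codisjoint_iff_exists_add_eq.mp hAc.codisjoint a
    rw [map_add, hR₁ y hy, hR₂ z hz, add_zero]; exact hy
  have hRp : ∀ a : A, a - R a ∈ Ap := by
    intro a
    obtain ⟨y, z, hy, hz, rfl⟩ := Submodule.codisjoint_iff_exists_add_eq.mp hAc.codisjoint a
    rw [map_add, hR₁ y hy, hR₂ z hz, add_zero, add_sub_cancel_left]; exact hz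
  set L : H ⊗[K] H →ₗ[K] A :=
    (LinearMap.mul' K A) ∘ₗ (TensorProduct.map φm φ.toLinearMap) with hLdef
  have hL : ∀ a b : H, L (a ⊗ₜ[K] b) = φm a * φ b := by
    intro a b; simp [hLdef, LinearMap.mul'_apply]
  have hbog : ∀ z : H, bogoliubov φ.toLinearMap φm z =
      φ z + L (Coalgebra.comul (R := K) z - (1 : H) ⊗ₜ[K] z - z ⊗ₜ[K] (1 : H)) := by
    intro z; rfl
  have h1F : ∀ j, (1 : H) ∈ F j := fun j =>
    hmono (Nat.zero_le j) (hconn ▸ Submodule.mem_span_singleton_self 1)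
  have elt0 : ∀ x ∈ F 0, Coalgebra.counit (R := K) x = 0 → x = 0 := by
    intro x hx hεx
    rw [hconn] at hx
    obtain ⟨c, rfl⟩ := Submodule.mem_span_singleton.1 hx
    rw [map_smul] at hεx
    rw [Bialgebra.counit_one, smul_eq_mul, mul_one] at hεx
    rw [hεx, zero_smul]
  -- the key induction
  have key : ∀ N n m (x y : H), n + m ≤ N → x ∈ F n → Coalgebra.counit (R := K) x = 0 →
      y ∈ F m → Coalgebra.counit (R := K) y = 0 → φm (x * y) = φm x * φm y := by
    intro N
    induction N with
    | zero =>
      intro n m x y hnm hx hεx hy hεy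
      have hn0 : n = 0 := by omega
      have : x = 0 := elt0 x (hn0 ▸ hx) hεx
      simp [this]
    | succ N ih =>
      intro n m x y hnm hx hεx hy hεy
      rcases Nat.lt_or_ge (n + m) (N + 1) with hlt | hge
      · exact ih n m x y (Nat.lt_succ_iff.mp hlt) hx hεx hy hεy
      have hN : n + m = N + 1 := le_antisymm hnm hge
      by_cases hn0 : n = 0
      · have : x = 0 := elt0 x (hn0 ▸ hx) hεx
        simp [this]
      by_cases hm0 : m = 0
      · have : y = 0 := elt0 y (hm0 ▸ hy) hεy
        simp [this]
      -- main case
      obtain ⟨Sx, hSx⟩ := tensorSub_repr (reduced_comul_mem F hmono hcomul hconn n x hx hεx)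
      obtain ⟨Sy, hSy⟩ := tensorSub_repr (reduced_comul_mem F hmono hcomul hconn m y hy hεy)
      set Dx : H ⊗[K] H := Coalgebra.comul (R := K) x - (1 : H) ⊗ₜ[K] x - x ⊗ₜ[K] (1 : H)
        with hDx
      set Dy : H ⊗[K] H := Coalgebra.comul (R := K) y - (1 : H) ⊗ₜ[K] y - y ⊗ₜ[K] (1 : H)
        with hDy
      -- component facts
      have memx : ∀ z : (↥(F (n - 1) ⊓ LinearMap.ker (Coalgebra.counit (R := K))) ×
          ↥(F (n - 1) ⊓ LinearMap.ker (Coalgebra.counit (R := K)))),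
          (z.1 : H) ∈ F (n - 1) ∧ Coalgebra.counit (R := K) (z.1 : H) = 0 := by
        intro z
        have := z.1.2
        rw [Submodule.mem_inf] at this
        exact ⟨this.1, LinearMap.mem_ker.1 this.2⟩
      have memy : ∀ z : (↥(F (m - 1) ⊓ LinearMap.ker (Coalgebra.counit (R := K))) ×
          ↥(F (m - 1) ⊓ LinearMap.ker (Coalgebra.counit (R := K)))),
          (z.1 : H) ∈ F (m - 1) ∧ Coalgebra.counit (R := K) (z.1 : H) = 0 := by
        intro z
        have := z.1.2
        rw [Submodule.mem_inf] at this
        exact ⟨this.1, LinearMap.mem_ker.1 this.2⟩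
      -- induction hypothesis instances
      have ihx : ∀ z ∈ Sy, φm (x * (z.1 : H)) = φm x * φm (z.1 : H) := by
        intro z _
        exact ih n (m - 1) x (z.1 : H) (by omega) hx hεx (memy z).1 (memy z).2
      have ihy : ∀ z ∈ Sx, φm ((z.1 : H) * y) = φm (z.1 : H) * φm y := by
        intro z _
        exact ih (n - 1) m (z.1 : H) y (by omega) (memx z).1 (memx z).2 hy hεy
      have ihxy : ∀ zx ∈ Sx, ∀ zy ∈ Sy,
          φm ((zx.1 : H) * (zy.1 : H)) = φm (zx.1 : H) * φm (zy.1 : H) := by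
        intro zx _ zy _
        exact ih (n - 1) (m - 1) _ _ (by omega) (memx zx).1 (memx zx).2
          (memy zy).1 (memy zy).2
      -- comul expansions
      have hΔx : Coalgebra.comul (R := K) x = (1 : H) ⊗ₜ[K] x + x ⊗ₜ[K] (1 : H) + Dx := by
        rw [hDx]; abel
      have hΔy : Coalgebra.comul (R := K) y = (1 : H) ⊗ₜ[K] y + y ⊗ₜ[K] (1 : H) + Dy := by
        rw [hDy]; abel
      have hDxy : Coalgebra.comul (R := K) (x * y) - (1 : H) ⊗ₜ[K] (x * y)
          - (x * y) ⊗ₜ[K] (1 : H) =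
          y ⊗ₜ[K] x + x ⊗ₜ[K] y + ((1 : H) ⊗ₜ[K] x) * Dy + (x ⊗ₜ[K] (1 : H)) * Dy
            + Dx * ((1 : H) ⊗ₜ[K] y) + Dx * (y ⊗ₜ[K] (1 : H)) + Dx * Dy := by
        rw [Bialgebra.comul_mul, hΔx, hΔy]
        simp only [mul_add, add_mul, Algebra.TensorProduct.tmul_mul_tmul, one_mul, mul_one]
        abel
      -- compute L of each piece
      have hLx : L Dx = ∑ z ∈ Sx, φm (z.1 : H) * φ (z.2 : H) := by
        rw [hSx, map_sum]
        exact Finset.sum_congr rfl fun z _ => hL _ _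
      have hLy : L Dy = ∑ z ∈ Sy, φm (z.1 : H) * φ (z.2 : H) := by
        rw [hSy, map_sum]
        exact Finset.sum_congr rfl fun z _ => hL _ _
      have e1 : L (((1 : H) ⊗ₜ[K] x) * Dy) = φ x * L Dy := by
        rw [hLy, hSy, Finset.mul_sum, map_sum, Finset.mul_sum]
        refine Finset.sum_congr rfl fun z hz => ?_
        rw [Algebra.TensorProduct.tmul_mul_tmul, one_mul, hL, map_mul]
        ring
      have e2 : L ((x ⊗ₜ[K] (1 : H)) * Dy) = φm x * L Dy := by
        rw [hLy, hSy, Finset.mul_sum, map_sum, Finset.mul_sum]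
        refine Finset.sum_congr rfl fun z hz => ?_
        rw [Algebra.TensorProduct.tmul_mul_tmul, one_mul, hL, ihx z hz]
        ring
      have e3 : L (Dx * ((1 : H) ⊗ₜ[K] y)) = φ y * L Dx := by
        rw [hLx, hSx, Finset.sum_mul, map_sum, Finset.mul_sum]
        refine Finset.sum_congr rfl fun z hz => ?_
        rw [Algebra.TensorProduct.tmul_mul_tmul, mul_one, hL, map_mul]
        ring
      have e4 : L (Dx * (y ⊗ₜ[K] (1 : H))) = φm y * L Dx := by
        rw [hLx, hSx, Finset.sum_mul, map_sum, Finset.mul_sum]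
        refine Finset.sum_congr rfl fun z hz => ?_
        rw [Algebra.TensorProduct.tmul_mul_tmul, mul_one, hL, ihy z hz]
        ring
      have e5 : L (Dx * Dy) = L Dx * L Dy := by
        rw [hLx, hLy, hSx, hSy, Finset.sum_mul_sum, Finset.sum_mul_sum]
        rw [map_sum]
        refine Finset.sum_congr rfl fun zx hzx => ?_
        rw [map_sum]
        refine Finset.sum_congr rfl fun zy hzy => ?_
        rw [Algebra.TensorProduct.tmul_mul_tmul, hL, ihxy zx hzx zy hzy, map_mul]
        ring
      have hLDxy : L (Coalgebra.comul (R := K) (x * y) - (1 : H) ⊗ₜ[K] (x * y)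
          - (x * y) ⊗ₜ[K] (1 : H)) =
          φm y * φ x + φm x * φ y + φ x * L Dy + φm x * L Dy
            + φ y * L Dx + φm y * L Dx + L Dx * L Dy := by
        rw [hDxy]
        simp only [map_add]
        rw [hL y x, hL x y, e1, e2, e3, e4, e5]
      -- the Rota-Baxter argument
      have hεxy : Coalgebra.counit (R := K) (x * y) = 0 := by
        rw [Bialgebra.counit_mul, hεx, zero_mul]
      have hpsix : φm x = -R (φ x + L Dx) := by
        rw [hφm x hεx, hbog x, ← hDx]
      have hpsiy : φm y = -R (φ y + L Dy) := by
        rw [hφm y hεy, hbog y, ← hDy]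
      have hsum : φ (x * y) + L (Coalgebra.comul (R := K) (x * y) - (1 : H) ⊗ₜ[K] (x * y)
          - (x * y) ⊗ₜ[K] (1 : H)) =
          ((φ x + L Dx) + φm x) * ((φ y + L Dy) + φm y) - φm x * φm y := by
        rw [map_mul, hLDxy]
        ring
      have hAp1 : (φ x + L Dx) + φm x ∈ Ap := by
        rw [hpsix]
        simpa [sub_eq_add_neg] using hRp (φ x + L Dx)
      have hAp2 : (φ y + L Dy) + φm y ∈ Ap := by
        rw [hpsiy]
        simpa [sub_eq_add_neg] using hRp (φ y + L Dy)
      have hAm12 : φm x * φm y ∈ Am := by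
        rw [hpsix, hpsiy, neg_mul_neg]
        exact hAm _ (hRmem _) _ (hRmem _)
      calc φm (x * y) = -R (φ (x * y) + L (Coalgebra.comul (R := K) (x * y)
              - (1 : H) ⊗ₜ[K] (x * y) - (x * y) ⊗ₜ[K] (1 : H))) := by
            rw [hφm (x * y) hεxy, hbog (x * y)]
        _ = -R (((φ x + L Dx) + φm x) * ((φ y + L Dy) + φm y) - φm x * φm y) := by
            rw [hsum]
        _ = -(R (((φ x + L Dx) + φm x) * ((φ y + L Dy) + φm y)) - R (φm x * φm y)) := by
            rw [map_sub]
        _ = φm x * φm y := by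
            rw [hR₂ _ (hAp _ hAp1 _ hAp2), hR₁ _ hAm12]
            ring
  -- extend multiplicativity to all of H
  have step : ∀ (c d : K) (u v : H), φm (u * v) = φm u * φm v →
      φm ((c • (1 : H) + u) * (d • (1 : H) + v)) =
        φm (c • (1 : H) + u) * φm (d • (1 : H) + v) := by
    intro c d u v h
    have expand : (c • (1 : H) + u) * (d • (1 : H) + v)
        = (c * d) • (1 : H) + c • v + d • u + u * v := by
      simp only [mul_add, add_mul, smul_mul_assoc, mul_smul_comm, one_mul, mul_one, smul_smul,
        smul_add]
      module
    rw [expand, map_add, map_add, map_add, map_smul, map_smul, map_smul, hφm1, h,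
      map_add, map_add, map_smul, map_smul, hφm1]
    simp only [Algebra.smul_def, map_mul]
    ring
  have mult : ∀ x y : H, φm (x * y) = φm x * φm y := by
    intro x y
    obtain ⟨n, hn⟩ := hcover x
    obtain ⟨m, hm⟩ := hcover y
    have hεx' : Coalgebra.counit (R := K)
        (x - Coalgebra.counit (R := K) x • (1 : H)) = 0 := by
      rw [map_sub, map_smul, Bialgebra.counit_one, smul_eq_mul, mul_one, sub_self]
    have hεy' : Coalgebra.counit (R := K)
        (y - Coalgebra.counit (R := K) y • (1 : H)) = 0 := by
      rw [map_sub, map_smul, Bialgebra.counit_one, smul_eq_mul, mul_one, sub_self]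
    have hx'F : x - Coalgebra.counit (R := K) x • (1 : H) ∈ F n :=
      sub_mem hn (Submodule.smul_mem _ _ (h1F n))
    have hy'F : y - Coalgebra.counit (R := K) y • (1 : H) ∈ F m :=
      sub_mem hm (Submodule.smul_mem _ _ (h1F m))
    have hkey := key (n + m) n m _ _ le_rfl hx'F hεx' hy'F hεy'
    have hxeq : x = Coalgebra.counit (R := K) x • (1 : H)
        + (x - Coalgebra.counit (R := K) x • (1 : H)) := by abel
    have hyeq : y = Coalgebra.counit (R := K) y • (1 : H)
        + (y - Coalgebra.counit (R := K) y • (1 : H)) := by abel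
    calc φm (x * y)
        = φm ((Coalgebra.counit (R := K) x • (1 : H)
            + (x - Coalgebra.counit (R := K) x • (1 : H)))
          * (Coalgebra.counit (R := K) y • (1 : H)
            + (y - Coalgebra.counit (R := K) y • (1 : H)))) := by rw [← hxeq, ← hyeq]
      _ = φm (Coalgebra.counit (R := K) x • (1 : H)
            + (x - Coalgebra.counit (R := K) x • (1 : H)))
          * φm (Coalgebra.counit (R := K) y • (1 : H)
            + (y - Coalgebra.counit (R := K) y • (1 : H))) := step _ _ _ _ hkey
      _ = φm x * φm y := by rw [← hxeq, ← hyeq]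
  refine ⟨mult, ?_, ?_⟩
  · show L (Coalgebra.comul (R := K) (1 : H)) = 1
    rw [Bialgebra.comul_one, Algebra.TensorProduct.one_def, hL, hφm1, map_one, one_mul]
  · have hmulL : ∀ u v : H ⊗[K] H, L (u * v) = L u * L v := by
      intro u v
      induction u with
      | zero => simp
      | tmul a b =>
        induction v with
        | zero => simp
        | tmul cc dd =>
          rw [Algebra.TensorProduct.tmul_mul_tmul, hL, hL, hL, mult, map_mul]
          ring
        | add v1 v2 h1 h2 =>
          rw [mul_add, map_add, map_add, h1, h2, mul_add]
      | add u1 u2 h1 h2 =>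
        rw [add_mul, map_add, map_add, h1, h2, add_mul]
    intro x y
    show L (Coalgebra.comul (R := K) (x * y)) =
      L (Coalgebra.comul (R := K) x) * L (Coalgebra.comul (R := K) y)
    rw [Bialgebra.comul_mul, hmulL]
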